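/- Lemma 1.1(d): Suppose there exists a positive scalar c such that cω is a coroot α∨ ∈ R∨; then the corresponding root α belongs to R^+. If C'' is a chamber in X relative to R such that (1) α takes nonnegative values on C'', (2) ker α is a wall of C'', and (3) C̃'' = C̃₀, then l_R(C₀, C'') = (|R^+| − |R^+_ω| − 1)/2 (the right-hand side being an integer, since |R^+| − |R^+_ω| is odd when ℝω contains a coroot). -/

import Mathlib

open Pointwise
open scoped Classical

namespace GKM

variable {V : Type*} [AddCommGroup V] [Module ℝ V]

/-- The dual cone `C* = {λ | λ ≥ 0 on C}` of a subset `C` of `V`. -/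
def dualCone (C : Set V) : Set (Module.Dual ℝ V) := {l | ∀ x ∈ C, 0 ≤ l x}

/-- `C` is a closed convex polyhedral cone: the set of nonnegative linear
combinations of a finite subset of `V`. -/
def IsPolyhedralCone (C : Set V) : Prop :=
  ∃ S : Finset V, C = {x | ∃ c : V → ℝ, (∀ v, 0 ≤ c v) ∧ x = ∑ v ∈ S, c v • v}

/-- `F` is a (closed) face of the cone `C`. -/
def IsFaceOf (F C : Set V) : Prop := ∃ l ∈ dualCone C, F = C ∩ {x | l x = 0}

/-- The dimension of (the linear span of) a subset of `V`. -/
noncomputable def sdim (F : Set V) : ℕ := Module.finrank ℝ (Submodule.span ℝ F)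

/-- `ℤ`-valued characteristic function `ξ_S`. -/
noncomputable def ind {α : Type*} (S : Set α) (a : α) : ℤ := if a ∈ S then 1 else 0

/-- `ψ_C(x,λ) = Σ_{F face of C} (−1)^{dim F} ξ_{(F^⊥)*}(x) · ξ_{F*}(λ)`,
where `(F^⊥)* = C + span F` and `F*` is the dual cone of `F`. -/
noncomputable def psi (C : Set V) (x : V) (l : Module.Dual ℝ V) : ℤ :=
  ∑ᶠ F ∈ {F : Set V | IsFaceOf F C},
    (-1 : ℤ) ^ sdim F * ind (C + (Submodule.span ℝ F : Set V)) x * ind (dualCone F) l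

/-- `x` is regular for the hyperplane arrangement `{ker α | α ∈ S}`. -/
def IsRegular (S : Set (Module.Dual ℝ V)) (x : V) : Prop := ∀ α ∈ S, α x ≠ 0

/-- `C` is a chamber of the arrangement `{ker α | α ∈ S}`: a connected component of
the set of regular points, equivalently (for a finite arrangement, which is the case
throughout) a nonempty maximal subset on which each `α ∈ S` has constant sign. -/
def IsChamber (S : Set (Module.Dual ℝ V)) (C : Set V) : Prop :=
  ∃ x, IsRegular S x ∧ C = {y | ∀ α ∈ S, 0 < α x * α y}

/-- The closure of a chamber, described combinatorially (for a chamber of a finite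
hyperplane arrangement this coincides with the topological closure). -/
def chClosure (S : Set (Module.Dual ℝ V)) (C : Set V) : Set V :=
  {y | ∀ α ∈ S, ∀ x ∈ C, 0 ≤ α x * α y}

/-- The hyperplane `ker α` separates `C₁` and `C₂`. -/
def Separates (α : Module.Dual ℝ V) (C₁ C₂ : Set V) : Prop :=
  ∀ x₁ ∈ C₁, ∀ x₂ ∈ C₂, α x₁ * α x₂ < 0

/-- `l(C₁,C₂)`: the number of hyperplanes of the arrangement separating `C₁`,`C₂`. -/
noncomputable def sep (S : Set (Module.Dual ℝ V)) (C₁ C₂ : Set V) : ℕ :=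
  {H : Set V | ∃ α ∈ S, H = {x | α x = 0} ∧ Separates α C₁ C₂}.ncard

/-- `ε(C₁,C₂) = (−1)^{l(C₁,C₂)}`. -/
noncomputable def eps (S : Set (Module.Dual ℝ V)) (C₁ C₂ : Set V) : ℤ :=
  (-1) ^ sep S C₁ C₂

/-- `ψ_R(C₀,x,λ) = Σ_C ε(C₀,C) ψ_{C̄}(x,λ)`, the sum over all chambers `C`. -/
noncomputable def psiR (S : Set (Module.Dual ℝ V)) (C₀ : Set V) (x : V)
    (l : Module.Dual ℝ V) : ℤ :=
  ∑ᶠ C ∈ {C : Set V | IsChamber S C}, eps S C₀ C * psi (chClosure S C) x l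

/-- `λ ∈ X*` is `R`-regular: it vanishes on no nonzero element of a 1-dimensional
face of the closure of a chamber in `X`. -/
def RRegular (S : Set (Module.Dual ℝ V)) (l : Module.Dual ℝ V) : Prop :=
  ∀ C : Set V, IsChamber S C → ∀ F : Set V, IsFaceOf F (chClosure S C) →
    sdim F = 1 → ∀ ω ∈ F, ω ≠ (0 : V) → l ω ≠ 0

/-- `ω` is a nonzero element of a 1-dimensional face of the closure of `C₀`. -/
def InOneDimFaceOfClosure (S : Set (Module.Dual ℝ V)) (C₀ : Set V) (ω : V) : Prop :=
  ω ≠ 0 ∧ ∃ F : Set V, IsFaceOf F (chClosure S C₀) ∧ sdim F = 1 ∧ ω ∈ F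

/-- `(X, X*, R, R∨)` is a (reduced, crystallographic) root system, `R ⊂ X*`
spanning `X*`, with coroot `α∨ = coroot α ∈ X` for each `α ∈ R`. -/
structure IsRootSystem (R : Set (Module.Dual ℝ V)) (coroot : Module.Dual ℝ V → V) : Prop where
  finite : R.Finite
  ne_zero : ∀ α ∈ R, α ≠ 0
  span_top : Submodule.span ℝ R = ⊤
  root_coroot_two : ∀ α ∈ R, α (coroot α) = 2
  pairing_int : ∀ α ∈ R, ∀ β ∈ R, ∃ n : ℤ, β (coroot α) = (n : ℝ)
  reflect_root_mem : ∀ α ∈ R, ∀ β ∈ R, β - β (coroot α) • α ∈ R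
  reflect_coroot : ∀ α ∈ R, ∀ β ∈ R,
    coroot (β - β (coroot α) • α) = coroot β - α (coroot β) • coroot α
  reduced : ∀ α ∈ R, ∀ c : ℝ, c • α ∈ R → c = 1 ∨ c = -1

/-- The Weyl group `W(R)`, the subgroup of `GL(X)` generated by the reflections
`s_α : x ↦ x − α(x)·α∨`, `α ∈ R`. -/
def weylGroup (R : Set (Module.Dual ℝ V)) (coroot : Module.Dual ℝ V → V) :
    Subgroup (V ≃ₗ[ℝ] V) :=
  Subgroup.closure {w : V ≃ₗ[ℝ] V | ∃ α ∈ R, ∀ x, w x = x - α x • coroot α}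

/-- The set `R⁺` of roots positive on the chamber `C`. -/
def posRoots (R : Set (Module.Dual ℝ V)) (C : Set V) : Set (Module.Dual ℝ V) :=
  {α ∈ R | ∀ x ∈ C, 0 < α x}

/-- The root system `R_ω = {α ∈ R | α(ω) = 0}` viewed on the quotient `X/ℝω`:
the set of functionals on `X/ℝω` whose pullback to `X` lies in `R`
(such a pullback automatically kills `ω`, hence lies in `R_ω`). -/
def quotRoots (R : Set (Module.Dual ℝ V)) (ω : V) :
    Set (Module.Dual ℝ (V ⧸ Submodule.span ℝ ({ω} : Set V))) :=
  {β | β.comp (Submodule.span ℝ ({ω} : Set V)).mkQ ∈ R}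

/-- The root system `R_α` (roots `β` with `α(β∨) = 0`) restricted to the
hyperplane `Y = ker α`. -/
def subRoots (R : Set (Module.Dual ℝ V)) (coroot : Module.Dual ℝ V → V)
    (α : Module.Dual ℝ V) : Set (Module.Dual ℝ ↥(LinearMap.ker α)) :=
  {m | ∃ β ∈ R, α (coroot β) = 0 ∧ m = β.comp (LinearMap.ker α).subtype}


private lemma exists_smul_of_ker_subset (α β : Module.Dual ℝ V) (v : V)
    (hv : α v ≠ 0) (h : ∀ x, α x = 0 → β x = 0) : ∃ e : ℝ, β = e • α := by
  refine ⟨β v / α v, ?_⟩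
  ext x
  have h1 : α (x - (α x / α v) • v) = 0 := by
    simp only [map_sub, map_smul, smul_eq_mul]
    field_simp; ring
  have h2 := h _ h1
  simp only [map_sub, map_smul, smul_eq_mul, sub_eq_zero] at h2
  simp only [LinearMap.smul_apply, smul_eq_mul]
  rw [h2]; field_simp

private lemma exists_generic (F : Set V) (h0 : (0:V) ∈ F)
    (hadd : ∀ a ∈ F, ∀ b ∈ F, a + b ∈ F)
    (hsmul : ∀ t : ℝ, 0 < t → ∀ a ∈ F, t • a ∈ F)
    (B : Finset (Module.Dual ℝ V)) :
    (∀ β ∈ B, ∃ f ∈ F, β f ≠ 0) → ∃ y ∈ F, ∀ β ∈ B, β y ≠ 0 := by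
  induction B using Finset.induction_on with
  | empty => exact fun _ => ⟨0, h0, by simp⟩
  | @insert a s ha IH =>
    intro hW
    obtain ⟨y, hyF, hy⟩ := IH (fun β hβ => hW β (Finset.mem_insert_of_mem hβ))
    obtain ⟨f, hfF, hf⟩ := hW a (Finset.mem_insert_self _ _)
    have hfin : ∀ β ∈ insert a s, {t : ℝ | β y + t * β f = 0}.Finite := by
      intro β hβ
      by_cases hβf : β f = 0
      · rcases Finset.mem_insert.mp hβ with rfl | hβ
        · exact absurd hβf hf
        · have : {t : ℝ | β y + t * β f = 0} = ∅ := by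
            ext t; simp [hβf, hy β hβ]
          simp [this]
      · apply Set.Finite.subset (Set.finite_singleton (-(β y) / β f))
        intro t ht
        simp only [Set.mem_setOf_eq] at ht
        simp only [Set.mem_singleton_iff]
        field_simp
        linarith
    have hbad : {t : ℝ | ∃ β ∈ insert a s, β y + t * β f = 0}.Finite := by
      apply Set.Finite.subset ((s.finite_toSet.insert a).biUnion (fun b hb => hfin b (by simpa using hb)))
      rintro t ⟨β, hβ, h⟩
      exact Set.mem_biUnion (by simpa using hβ) h
    obtain ⟨t, ht⟩ := ((Set.Ioi_infinite (0:ℝ)).diff hbad).nonempty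
    refine ⟨y + t • f, hadd y hyF _ (hsmul t ht.1 f hfF), ?_⟩
    intro β hβ hcon
    exact ht.2 ⟨β, hβ, by simpa [map_add, map_smul, smul_eq_mul] using hcon⟩


/-- **Lemma 1.1(d)**: if `cω` is a coroot `α∨` (`c > 0`), then `α ∈ R⁺`, and for any
chamber `C''` on which `α` is nonnegative, having `ker α` as a wall and with
`C̃'' = C̃₀`, one has `l(C₀,C'') = (|R⁺| − |R⁺_ω| − 1)/2`. -/
theorem lemma_1_1_d
    {V : Type*} [AddCommGroup V] [Module ℝ V] [FiniteDimensional ℝ V]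
    (R : Set (Module.Dual ℝ V)) (coroot : Module.Dual ℝ V → V)
    (hRS : IsRootSystem R coroot)
    (C₀ : Set V) (hC₀ : IsChamber R C₀)
    (ω : V) (hωface : InOneDimFaceOfClosure R C₀ ω)
    (Rω RP RPω : Set (Module.Dual ℝ V))
    (hRω : Rω = {α ∈ R | α ω = 0})
    (hRP : RP = posRoots R C₀) (hRPω : RPω = Rω ∩ RP)
    (c : ℝ) (hc : 0 < c) (α : Module.Dual ℝ V) (hα : α ∈ R)
    (hcω : c • ω = coroot α) :
    -- the root `α` corresponding to the coroot `α∨ = cω` is positive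
    α ∈ RP ∧
    -- and for every chamber `C''` satisfying conditions (1), (2), (3):
    (∀ C'' : Set V, IsChamber R C'' →
      -- (1) `α` takes nonnegative values on `C''`
      (∀ x ∈ C'', 0 ≤ α x) →
      -- (2) `ker α` is a wall of `C''`
      (∃ F : Set V, IsFaceOf F (chClosure R C'') ∧
          (Submodule.span ℝ F : Set V) = {x | α x = 0}) →
      -- (3) `C̃'' = C̃₀`
      (∃ D : Set V, IsChamber Rω D ∧ C'' ⊆ D ∧ C₀ ⊆ D) →
      -- conclusion: `l(C₀,C'') = (|R⁺| − |R⁺_ω| − 1)/2`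
      2 * (sep R C₀ C'' : ℤ) = (RP.ncard : ℤ) - (RPω.ncard : ℤ) - 1) := by
  classical
  obtain ⟨hωne, F₀, hF₀, -, hωF₀⟩ := hωface
  obtain ⟨x₀, hx₀reg, hC₀eq⟩ := hC₀
  have hx₀ : x₀ ∈ C₀ := by
    rw [hC₀eq]; intro β hβ; exact mul_self_pos.mpr (hx₀reg β hβ)
  have hωcl : ω ∈ chClosure R C₀ := by
    obtain ⟨l, -, hFeq⟩ := hF₀
    have h := hωF₀; rw [hFeq] at h; exact h.1
  have hcαω : c * α ω = 2 := by
    have h2 := hRS.root_coroot_two α hα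
    rw [← hcω, map_smul, smul_eq_mul] at h2; exact h2
  have hαωpos : 0 < α ω := by nlinarith
  have hne0C₀ : ∀ β ∈ R, ∀ x ∈ C₀, β x ≠ 0 := by
    intro β hβ x hx h
    rw [hC₀eq] at hx
    have h' := hx β hβ
    rw [h] at h'; simp at h'
  have hsign0 : ∀ β ∈ R, ∀ x ∈ C₀, β ω ≠ 0 → 0 < β x * β ω := by
    intro β hβ x hx hβω
    exact lt_of_le_of_ne (hωcl β hβ x hx)
      (Ne.symm (mul_ne_zero (hne0C₀ β hβ x hx) hβω))
  have hαRP : α ∈ RP := by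
    rw [hRP]
    refine ⟨hα, fun x hx => ?_⟩
    have h := hsign0 α hα x hx hαωpos.ne'
    nlinarith
  have hαposC₀ : ∀ x ∈ C₀, 0 < α x := by
    rw [hRP] at hαRP; exact hαRP.2
  have hnegmem : ∀ β ∈ R, -β ∈ R := by
    intro β hβ
    have h := hRS.reflect_root_mem β hβ β hβ
    rw [hRS.root_coroot_two β hβ] at h
    have he : β - (2:ℝ) • β = -β := by module
    rwa [he] at h
  have hposRP : ∀ β ∈ R, 0 < β x₀ → β ∈ RP := by
    intro β hβ hpos
    rw [hRP]
    refine ⟨hβ, fun x hx => ?_⟩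
    rw [hC₀eq] at hx
    nlinarith [hx β hβ]
  refine ⟨hαRP, ?_⟩
  intro C'' hC'' h1 h2 h3
  obtain ⟨x'', hx''reg, hC''eq⟩ := hC''
  have hx'' : x'' ∈ C'' := by
    rw [hC''eq]; intro β hβ; exact mul_self_pos.mpr (hx''reg β hβ)
  have hne0C'' : ∀ β ∈ R, ∀ x ∈ C'', β x ≠ 0 := by
    intro β hβ x hx h
    rw [hC''eq] at hx
    have h' := hx β hβ
    rw [h] at h'; simp at h'
  obtain ⟨Fw, hFw, hFwspan⟩ := h2
  obtain ⟨D, ⟨xD, -, hDeq⟩, hC''D, hC₀D⟩ := h3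
  obtain ⟨l, -, hFweq⟩ := hFw
  have hFwcl : Fw ⊆ chClosure R C'' := by
    rw [hFweq]; exact Set.inter_subset_left
  have h0Fw : (0:V) ∈ Fw := by
    rw [hFweq]
    exact ⟨fun β hβ x hx => by simp, by simp⟩
  have haddFw : ∀ a ∈ Fw, ∀ b ∈ Fw, a + b ∈ Fw := by
    intro a ha b hb
    rw [hFweq] at ha hb ⊢
    refine ⟨fun β hβ x hx => ?_, ?_⟩
    · have h1' := ha.1 β hβ x hx
      have h2' := hb.1 β hβ x hx
      simp only [map_add]
      nlinarith
    · have := ha.2; have := hb.2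
      simp only [Set.mem_setOf_eq, map_add] at *
      linarith
  have hsmulFw : ∀ t : ℝ, 0 < t → ∀ a ∈ Fw, t • a ∈ Fw := by
    intro t ht a ha
    rw [hFweq] at ha ⊢
    refine ⟨fun β hβ x hx => ?_, ?_⟩
    · have h1' := ha.1 β hβ x hx
      simp only [map_smul, smul_eq_mul]
      nlinarith
    · have := ha.2
      simp only [Set.mem_setOf_eq, map_smul, smul_eq_mul] at *
      simp [this]
  have hprop : ∀ β ∈ R, (∀ x, α x = 0 → β x = 0) → β = α ∨ β = -α := by
    intro β hβ hker
    obtain ⟨v, hv⟩ : ∃ v, α v ≠ 0 := by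
      by_contra hcon; push_neg at hcon
      exact hRS.ne_zero α hα (LinearMap.ext fun x => by simp [hcon x])
    obtain ⟨e, he⟩ := exists_smul_of_ker_subset α β v hv hker
    rcases hRS.reduced α hα e (he ▸ hβ) with h | h
    · left; rw [he, h, one_smul]
    · right; rw [he, h]; module
  obtain ⟨y, hyFw, hygen⟩ := exists_generic Fw h0Fw haddFw hsmulFw
    (hRS.finite.toFinset.filter (fun β => β ≠ α ∧ β ≠ -α)) (by
      intro β hβ
      simp only [Finset.mem_filter, Set.Finite.mem_toFinset] at hβ
      obtain ⟨hβR, hβα, hβα'⟩ := hβ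
      by_contra hcon; push_neg at hcon
      have hker : ∀ x, α x = 0 → β x = 0 := by
        intro x hx
        have hxspan : x ∈ Submodule.span ℝ Fw := by
          rw [← SetLike.mem_coe, hFwspan]; exact hx
        have hFsub : Fw ⊆ (LinearMap.ker β : Set V) := fun f hf =>
          LinearMap.mem_ker.mpr (hcon f hf)
        exact LinearMap.mem_ker.mp (Submodule.span_le.mpr hFsub hxspan)
      rcases hprop β hβR hker with rfl | rfl
      · exact hβα rfl
      · exact hβα' rfl)
  have hy : ∀ β ∈ R, β ≠ α → β ≠ -α → β y ≠ 0 := by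
    intro β hβ hb1 hb2
    exact hygen β (by
      simp only [Finset.mem_filter, Set.Finite.mem_toFinset]
      exact ⟨hβ, hb1, hb2⟩)
  have hαy : α y = 0 := by
    have h : y ∈ (Submodule.span ℝ Fw : Set V) := Submodule.subset_span hyFw
    rw [hFwspan] at h
    exact h
  have hycl : y ∈ chClosure R C'' := hFwcl hyFw
  have hsign'' : ∀ β ∈ R, β ≠ α → β ≠ -α → ∀ x ∈ C'', 0 < β x * β y := by
    intro β hβ hb1 hb2 x hx
    exact lt_of_le_of_ne (hycl β hβ x hx)
      (Ne.symm (mul_ne_zero (hne0C'' β hβ x hx) (hy β hβ hb1 hb2)))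
  have hαpos'' : ∀ x ∈ C'', 0 < α x := fun x hx =>
    lt_of_le_of_ne (h1 x hx) (Ne.symm (hne0C'' α hα x hx))
  have hchar : ∀ β ∈ R,
      (Separates β C₀ C'' ↔ (β ≠ α ∧ β ≠ -α ∧ β ω ≠ 0 ∧ β y * β ω < 0)) := by
    intro β hβ
    constructor
    · intro hsep
      have hs := hsep x₀ hx₀ x'' hx''
      have hβα : β ≠ α := by
        rintro rfl
        nlinarith [hαposC₀ x₀ hx₀, hαpos'' x'' hx'']
      have hβα' : β ≠ -α := by
        rintro rfl
        simp only [LinearMap.neg_apply] at hs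
        nlinarith [hαposC₀ x₀ hx₀, hαpos'' x'' hx'']
      have hβω : β ω ≠ 0 := by
        intro h0
        have hβRω : β ∈ Rω := by rw [hRω]; exact ⟨hβ, h0⟩
        have hd1 := hC₀D hx₀
        have hd2 := hC''D hx''
        rw [hDeq] at hd1 hd2
        have e1 : 0 < β xD * β x₀ := hd1 β hβRω
        have e2 : 0 < β xD * β x'' := hd2 β hβRω
        nlinarith [mul_pos e1 e2, sq_nonneg (β xD)]
      refine ⟨hβα, hβα', hβω, ?_⟩
      nlinarith [hsign0 β hβ x₀ hx₀ hβω, hsign'' β hβ hβα hβα' x'' hx'']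
    · rintro ⟨hβα, hβα', hβω, hβyω⟩ x₁ hh₁ x₂ hh₂
      nlinarith [hsign0 β hβ x₁ hh₁ hβω, hsign'' β hβ hβα hβα' x₂ hh₂]
  set sA : V → V := fun z => z - α z • coroot α with hsA
  have hsAsA : ∀ z, sA (sA z) = z := by
    intro z
    have h2 := hRS.root_coroot_two α hα
    simp only [hsA, map_sub, map_smul, smul_eq_mul, h2]
    module
  set r : Module.Dual ℝ V → Module.Dual ℝ V := fun β => β - β (coroot α) • α with hr
  have hrmem : ∀ β ∈ R, r β ∈ R := fun β hβ => hRS.reflect_root_mem α hα β hβ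
  have hcor : ∀ β : Module.Dual ℝ V, β (coroot α) = c * β ω := by
    intro β; rw [← hcω, map_smul, smul_eq_mul]
  have hrω : ∀ β : Module.Dual ℝ V, r β ω = -(β ω) := by
    intro β
    simp only [hr, LinearMap.sub_apply, LinearMap.smul_apply, smul_eq_mul, hcor]
    linear_combination (-(β ω)) * hcαω
  have hry : ∀ β : Module.Dual ℝ V, r β y = β y := by
    intro β
    simp only [hr, LinearMap.sub_apply, LinearMap.smul_apply, smul_eq_mul, hαy,
      mul_zero, sub_zero]
  have hrs : ∀ (β : Module.Dual ℝ V) (z : V), r β z = β (sA z) := by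
    intro β z
    simp only [hr, hsA, LinearMap.sub_apply, LinearMap.smul_apply, smul_eq_mul,
      map_sub, map_smul]
    ring
  have himage : ∀ β : Module.Dual ℝ V, sA '' {x | β x = 0} = {x | r β x = 0} := by
    intro β; ext x
    simp only [Set.mem_image, Set.mem_setOf_eq, hrs]
    constructor
    · rintro ⟨w, hw, rfl⟩; rw [hsAsA]; exact hw
    · intro hx; exact ⟨sA x, hx, hsAsA x⟩
  set Zα : Set V := {x | α x = 0} with hZα
  set T : Set (Set V) := {H | ∃ β ∈ R, β ω ≠ 0 ∧ H = {x | β x = 0}} with hT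
  set Sp : Set (Set V) :=
    {H | ∃ β ∈ R, H = {x | β x = 0} ∧ Separates β C₀ C''} with hSp
  have hsepeq : sep R C₀ C'' = Sp.ncard := rfl
  have hTfin : T.Finite := by
    apply Set.Finite.subset (hRS.finite.image (fun β => {x | β x = 0}))
    rintro H ⟨β, hβ, -, rfl⟩
    exact Set.mem_image_of_mem _ hβ
  have hZαT : Zα ∈ T := ⟨α, hα, hαωpos.ne', rfl⟩
  have hker_ne : ∀ β ∈ R, β ≠ α → β ≠ -α → ({x | β x = 0} : Set V) ≠ Zα := by
    intro β hβ hb1 hb2 heq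
    have hyb : β y = 0 := by
      have : y ∈ ({x | β x = 0} : Set V) := by rw [heq]; exact hαy
      exact this
    exact hy β hβ hb1 hb2 hyb
  have K1 : ∀ H ∈ Sp, sA '' H ∈ (T \ {Zα}) \ Sp := by
    rintro H ⟨β, hβ, rfl, hsepβ⟩
    obtain ⟨hβα, hβα', hβω, hβyω⟩ := (hchar β hβ).mp hsepβ
    rw [himage β]
    have hrβ := hrmem β hβ
    have hrβy : r β y ≠ 0 := by rw [hry]; exact hy β hβ hβα hβα'
    have hrβα : r β ≠ α := fun h => hrβy (by rw [h]; exact hαy)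
    have hrβα' : r β ≠ -α := fun h => hrβy (by rw [h]; simp [hαy])
    refine ⟨⟨⟨r β, hrβ, by rw [hrω]; simpa using hβω, rfl⟩, ?_⟩, ?_⟩
    · simpa using hker_ne (r β) hrβ hrβα hrβα'
    · rintro ⟨γ, hγ, hγeq, hγsep⟩
      obtain ⟨hγα, hγα', hγω, hγyω⟩ := (hchar γ hγ).mp hγsep
      have hkersub : ∀ x, r β x = 0 → γ x = 0 := by
        intro x hx
        have hmem : x ∈ ({x | γ x = 0} : Set V) := by rw [← hγeq]; exact hx
        exact hmem
      obtain ⟨e, he⟩ := exists_smul_of_ker_subset (r β) γ y hrβy hkersub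
      have hey : γ y = e * r β y := by rw [he]; simp
      have heω : γ ω = e * r β ω := by rw [he]; simp
      rw [hry] at hey
      rw [hrω] at heω
      rw [hey, heω] at hγyω
      nlinarith [sq_nonneg e]
  have K2 : ∀ H ∈ (T \ {Zα}) \ Sp, sA '' H ∈ Sp := by
    rintro H ⟨⟨⟨β, hβ, hβω, rfl⟩, hHne⟩, hHns⟩
    have hβα : β ≠ α := by
      rintro rfl; exact hHne rfl
    have hβα' : β ≠ -α := by
      rintro rfl
      apply hHne
      show ({x | (-α) x = 0} : Set V) ∈ _
      have : ({x | (-α) x = 0} : Set V) = Zα := by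
        rw [hZα]; ext x; simp
      rw [this]; rfl
    have hβy : β y ≠ 0 := hy β hβ hβα hβα'
    have hnsep : ¬ Separates β C₀ C'' := fun hs => hHns ⟨β, hβ, rfl, hs⟩
    have hβyω : 0 < β y * β ω := by
      have hnlt : ¬ (β y * β ω < 0) := fun hlt =>
        hnsep ((hchar β hβ).mpr ⟨hβα, hβα', hβω, hlt⟩)
      rcases lt_or_gt_of_ne (mul_ne_zero hβy hβω) with h | h
      · exact absurd h hnlt
      · exact h
    rw [himage β]
    have hrβ := hrmem β hβ
    have hrβy : r β y ≠ 0 := by rw [hry]; exact hβy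
    have hrβα : r β ≠ α := fun h => hrβy (by rw [h]; exact hαy)
    have hrβα' : r β ≠ -α := fun h => hrβy (by rw [h]; simp [hαy])
    refine ⟨r β, hrβ, rfl, (hchar (r β) hrβ).mpr ⟨hrβα, hrβα', ?_, ?_⟩⟩
    · rw [hrω]; simpa using hβω
    · rw [hry, hrω]; nlinarith
  have himageinv : ∀ H : Set V, sA '' (sA '' H) = H := by
    intro H; rw [Set.image_image]; simp [hsAsA]
  have hSpT : Sp ⊆ T \ {Zα} := by
    rintro H ⟨β, hβ, rfl, hsepβ⟩
    obtain ⟨hβα, hβα', hβω, -⟩ := (hchar β hβ).mp hsepβ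
    exact ⟨⟨β, hβ, hβω, rfl⟩, by simpa using hker_ne β hβ hβα hβα'⟩
  have hT'fin : (T \ {Zα}).Finite := hTfin.diff
  have hSpfin : Sp.Finite := hT'fin.subset hSpT
  have hEeq : (T \ {Zα}) \ Sp = (fun H : Set V => sA '' H) '' Sp := by
    apply Set.Subset.antisymm
    · intro H hH
      exact ⟨sA '' H, K2 H hH, himageinv H⟩
    · rintro H' ⟨H, hH, rfl⟩
      exact K1 H hH
  have hinj : Function.Injective (fun H : Set V => sA '' H) := by
    intro H1 H2 h
    have h' := congrArg (fun H : Set V => sA '' H) h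
    simpa [himageinv] using h'
  have hcard1 : ((T \ {Zα}) \ Sp).ncard = Sp.ncard := by
    rw [hEeq]; exact Set.ncard_image_of_injective Sp hinj
  have hcard2 : ((T \ {Zα}) \ Sp).ncard + Sp.ncard = (T \ {Zα}).ncard :=
    Set.ncard_diff_add_ncard_of_subset hSpT hT'fin
  have hcard3 : (T \ {Zα}).ncard + ({Zα} : Set (Set V)).ncard = T.ncard :=
    Set.ncard_diff_add_ncard_of_subset (by simpa using hZαT) hTfin
  have hZαcard : ({Zα} : Set (Set V)).ncard = 1 := Set.ncard_singleton _
  have hTim : (fun β : Module.Dual ℝ V => {x | β x = 0}) '' (RP \ Rω) = T := by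
    apply Set.Subset.antisymm
    · rintro H ⟨β, ⟨hβRP, hβRω⟩, rfl⟩
      have hβR : β ∈ R := by rw [hRP] at hβRP; exact hβRP.1
      have hβω : β ω ≠ 0 := fun h => hβRω (by rw [hRω]; exact ⟨hβR, h⟩)
      exact ⟨β, hβR, hβω, rfl⟩
    · rintro H ⟨β, hβ, hβω, rfl⟩
      rcases (Ne.lt_or_gt (hx₀reg β hβ)) with hneg | hpos
      · refine ⟨-β, ⟨hposRP (-β) (hnegmem β hβ) (by simp; linarith), ?_⟩, ?_⟩
        · intro hmem
          rw [hRω] at hmem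
          simp only [Set.mem_setOf_eq, LinearMap.neg_apply, neg_eq_zero] at hmem
          exact hβω hmem.2
        · ext x; simp
      · refine ⟨β, ⟨hposRP β hβ hpos, ?_⟩, rfl⟩
        intro hmem
        rw [hRω] at hmem
        exact hβω hmem.2
  have hinjim : Set.InjOn (fun β : Module.Dual ℝ V => {x | β x = 0}) (RP \ Rω) := by
    intro β hβ' γ hγ' heq
    have hβRP := hβ'.1
    have hγRP := hγ'.1
    rw [hRP] at hβRP hγRP
    have hβx₀ : 0 < β x₀ := hβRP.2 x₀ hx₀
    have hγx₀ : 0 < γ x₀ := hγRP.2 x₀ hx₀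
    have heq' : ({x | β x = 0} : Set V) = {x | γ x = 0} := heq
    have hsub : ∀ x, β x = 0 → γ x = 0 := by
      intro x hx
      have hmem : x ∈ ({x | γ x = 0} : Set V) := by rw [← heq']; exact hx
      exact hmem
    obtain ⟨e, he⟩ := exists_smul_of_ker_subset β γ x₀ hβx₀.ne' hsub
    rcases hRS.reduced β hβRP.1 e (he ▸ hγRP.1) with h | h
    · rw [he, h, one_smul]
    · exfalso
      have : γ x₀ = -β x₀ := by rw [he, h]; simp
      linarith
  have hcard4 : T.ncard = (RP \ Rω).ncard := by
    rw [← hTim]; exact Set.ncard_image_of_injOn hinjim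
  have hRPfin : RP.Finite := by
    rw [hRP]; exact hRS.finite.subset (fun β hβ => hβ.1)
  have hRPωsub : RPω ⊆ RP := by rw [hRPω]; exact Set.inter_subset_right
  have hdiffeq : RP \ Rω = RP \ RPω := by
    rw [hRPω]; ext β
    simp only [Set.mem_diff, Set.mem_inter_iff]
    tauto
  have hcard5 : (RP \ RPω).ncard + RPω.ncard = RP.ncard :=
    Set.ncard_diff_add_ncard_of_subset hRPωsub hRPfin
  rw [hsepeq]
  rw [hdiffeq] at hcard4
  omega

end GKM
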